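/- The Brjuno function B : ℝ → [0,+∞] is lower semicontinuous. -/

import Mathlib

open scoped ENNReal Topology

noncomputable def gaussIter (x : ℝ) : ℕ → ℝ
  | 0 => Int.fract x
  | n + 1 => Int.fract (gaussIter x n)⁻¹

noncomputable def pquot (x : ℝ) : ℕ → ℤ
  | 0 => ⌊x⌋
  | n + 1 => ⌊(gaussIter x n)⁻¹⌋

noncomputable def qden (x : ℝ) : ℕ → ℤ
  | 0 => 1
  | 1 => pquot x 1
  | n + 2 => pquot x (n + 2) * qden x (n + 1) + qden x n

noncomputable def pnum (x : ℝ) : ℕ → ℤ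
  | 0 => pquot x 0
  | 1 => pquot x 1 * pquot x 0 + 1
  | n + 2 => pquot x (n + 2) * pnum x (n + 1) + pnum x n

noncomputable def brjunoTerm (x : ℝ) (k : ℕ) : ℝ :=
  Real.log (pquot x (k + 1)) / (qden x k : ℝ)

open Classical in
noncomputable def brjuno (x : ℝ) : ℝ≥0∞ :=
  if Irrational x then ∑' k, ENNReal.ofReal (brjunoTerm x k) else ⊤

noncomputable def brjunoTailE (x : ℝ) (n : ℕ) : ℝ≥0∞ :=
  ∑' k, ENNReal.ofReal (brjunoTerm x (n + k))

noncomputable def cfLen (x : ℝ) : ℕ := sInf {n | gaussIter x n = 0}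

noncomputable def brjunoFinite (x : ℝ) : ℝ :=
  ∑ k ∈ Finset.range (cfLen x), Real.log (pquot x (k + 1)) / (qden x k : ℝ)

def brjunoSuper (t : ℝ) : Set ℝ := {x | ENNReal.ofReal t < brjuno x}

def IsCompOf (A : Set ℝ) (a b : ℝ) : Prop := ∃ x ∈ A, connectedComponentIn A x = Set.Ioo a b

def diamond (κ a b : ℝ) : Set ℂ :=
  {z : ℂ | a < z.re ∧ z.re < b ∧ |z.im| ≤ κ * min (z.re - a) (b - z.re)}

noncomputable def CMset (κ M : ℝ) : Set ℂ :=
  (fun ξ : ℂ => Complex.exp (2 * Real.pi * Complex.I * ξ)) ''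
    (⋃ (a : ℝ) (b : ℝ) (_ : IsCompOf (brjunoSuper M) a b), diamond κ a b)ᶜ ∪ {0}

open Real Filter Set

lemma gaussIter_nonneg (x : ℝ) (n : ℕ) : 0 ≤ gaussIter x n := by
  cases n <;> exact Int.fract_nonneg _

lemma gaussIter_lt_one (x : ℝ) (n : ℕ) : gaussIter x n < 1 := by
  cases n <;> exact Int.fract_lt_one _

lemma irrational_gaussIter {x : ℝ} (hx : Irrational x) (n : ℕ) :
    Irrational (gaussIter x n) := by
  induction n with
  | zero => exact hx.sub_intCast ⌊x⌋
  | succ n ih => exact (ih.inv).sub_intCast _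

lemma gaussIter_shift (x : ℝ) (n : ℕ) :
    gaussIter x (n + 1) = gaussIter (gaussIter x 1) n := by
  induction n with
  | zero =>
      show gaussIter x 1 = Int.fract (gaussIter x 1)
      rw [Int.fract_eq_self.2 ⟨gaussIter_nonneg x 1, gaussIter_lt_one x 1⟩]
  | succ n ih => show Int.fract _ = Int.fract _; rw [ih]

lemma exists_gauss_zero_aux : ∀ q : ℕ, ∀ x : ℝ, 0 < q → (∃ p : ℤ, x * q = p) →
    ∃ n, gaussIter x n = 0 := by
  intro q
  induction q using Nat.strong_induction_on with
  | _ q ih =>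
    intro x hq ⟨p, hp⟩
    have hfr : Int.fract x * q = ((p - ⌊x⌋ * q : ℤ) : ℝ) := by
      push_cast; rw [Int.fract]; ring_nf; rw [mul_comm x q, mul_comm ((⌊x⌋:ℝ)) (q:ℝ)]
      rw [mul_comm (q:ℝ) x, hp]; ring
    set p₁ : ℤ := p - ⌊x⌋ * q with hp₁
    have hq0 : (0:ℝ) < q := by exact_mod_cast hq
    have h0 : (0:ℝ) ≤ (p₁:ℝ) := by rw [← hfr]; exact mul_nonneg (Int.fract_nonneg x) hq0.le
    have h1 : (p₁:ℝ) < q := by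
      rw [← hfr]
      calc Int.fract x * q < 1 * q := by
            exact mul_lt_mul_of_pos_right (Int.fract_lt_one x) hq0
        _ = q := one_mul _
    by_cases hz : p₁ = 0
    · refine ⟨0, ?_⟩
      have : Int.fract x * q = 0 := by rw [hfr, hz]; simp
      have := mul_eq_zero.1 this
      rcases this with h | h
      · exact h
      · exact absurd h (ne_of_gt hq0)
    · have hp₁pos : 0 < p₁ := by
        rcases lt_or_eq_of_le (by exact_mod_cast h0 : (0:ℤ) ≤ p₁) with h | h
        · exact h
        · exact absurd h.symm hz
      have hfx : Int.fract x = (p₁ : ℝ) / q := by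
        field_simp at hfr ⊢; linarith [hfr]
      have hfxpos : 0 < Int.fract x := by
        rw [hfx]; positivity
      -- y = gaussIter x 1
      set y := gaussIter x 1 with hy
      have hyq : ∃ r : ℤ, y * p₁ = r := by
        refine ⟨q - ⌊(Int.fract x)⁻¹⌋ * p₁, ?_⟩
        have : y = (Int.fract x)⁻¹ - ⌊(Int.fract x)⁻¹⌋ := by
          show Int.fract (gaussIter x 0)⁻¹ = _
          show Int.fract (Int.fract x)⁻¹ = _
          rw [Int.fract]
        rw [this, hfx]
        have hp₁r : (0:ℝ) < (p₁:ℝ) := by exact_mod_cast hp₁pos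
        push_cast
        field_simp
      have hcast : (p₁.toNat : ℤ) = p₁ := Int.toNat_of_nonneg hp₁pos.le
      have hq' : (p₁:ℤ) < (q:ℤ) := by exact_mod_cast h1
      have hlt : p₁.toNat < q := by omega
      obtain ⟨n, hn⟩ := ih p₁.toNat hlt y (by omega)
        (by obtain ⟨r, hr⟩ := hyq
            refine ⟨r, ?_⟩
            rw [← hr]
            congr 1
            exact_mod_cast congrArg (fun z : ℤ => (z : ℝ)) hcast)
      exact ⟨n + 1, by rw [gaussIter_shift]; exact hn⟩

lemma exists_gauss_zero {x : ℝ} (hx : ¬ Irrational x) : ∃ n, gaussIter x n = 0 := by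
  rw [Irrational] at hx
  push_neg at hx
  obtain ⟨q, hq⟩ := hx
  refine exists_gauss_zero_aux q.den x q.pos ⟨q.num, ?_⟩
  rw [← hq]
  exact_mod_cast congrArg (fun t : ℚ => (t : ℝ)) (Rat.mul_den_eq_num q)

/-- q_{n-1} with q_{-1} = 0 -/
noncomputable def qdenP (x : ℝ) : ℕ → ℤ
  | 0 => 0
  | n + 1 => qden x n

lemma qden_succ (x : ℝ) (n : ℕ) :
    qden x (n + 1) = pquot x (n + 1) * qden x n + qdenP x n := by
  match n with
  | 0 => show pquot x 1 = pquot x 1 * 1 + 0; ring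
  | n + 1 => rfl

lemma qden_congr {x z : ℝ} : ∀ n : ℕ, (∀ j, j ≤ n → pquot z j = pquot x j) →
    qden z n = qden x n := by
  intro n
  induction n using Nat.strong_induction_on with
  | _ n ih =>
    intro h
    match n with
    | 0 => rfl
    | 1 => show pquot z 1 = pquot x 1; exact h 1 le_rfl
    | n + 2 =>
      show pquot z (n+2) * qden z (n+1) + qden z n = pquot x (n+2) * qden x (n+1) + qden x n
      rw [h (n+2) le_rfl, ih (n+1) (by omega) (fun j hj => h j (by omega)),
        ih n (by omega) (fun j hj => h j (by omega))]

lemma one_le_qden {z : ℝ} : ∀ n : ℕ, (∀ j, 1 ≤ j → j ≤ n → 1 ≤ pquot z j) →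
    1 ≤ qden z n := by
  intro n
  induction n using Nat.strong_induction_on with
  | _ n ih =>
    intro h
    match n with
    | 0 => exact le_rfl
    | 1 => exact h 1 le_rfl le_rfl
    | n + 2 =>
      show 1 ≤ pquot z (n+2) * qden z (n+1) + qden z n
      have h1 := ih (n+1) (by omega) (fun j h1 h2 => h j h1 (by omega))
      have h2 := ih n (by omega) (fun j h1 h2 => h j h1 (by omega))
      have h3 := h (n+2) (by omega) le_rfl
      nlinarith

lemma qdenP_nonneg {z : ℝ} (n : ℕ) (h : ∀ j, 1 ≤ j → j ≤ n → 1 ≤ pquot z j) :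
    0 ≤ qdenP z n := by
  match n with
  | 0 => exact le_rfl
  | n + 1 =>
    exact le_trans zero_le_one (one_le_qden n (fun j h1 h2 => h j h1 (by omega)))

/-- if 1 ≤ j and gaussIter z (j-1) ∈ (0,1) then pquot z j ≥ 1 -/
lemma one_le_pquot {z : ℝ} {j : ℕ} (hj : 1 ≤ j) (h : gaussIter z (j - 1) ≠ 0) :
    1 ≤ pquot z j := by
  obtain ⟨k, rfl⟩ : ∃ k, j = k + 1 := ⟨j - 1, by omega⟩
  show (1:ℤ) ≤ ⌊(gaussIter z k)⁻¹⌋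
  rw [Int.le_floor]
  have h0 : 0 < gaussIter z k :=
    lt_of_le_of_ne (gaussIter_nonneg z k) (by simpa [eq_comm] using h)
  have := gaussIter_lt_one z k
  rw [show ((1:ℤ):ℝ) = 1 by norm_num]
  rw [le_inv_comm₀] <;> simp_all <;> linarith

/-- Lemma E: small iterate forces big next partial quotient -/
lemma pquot_big {z : ℝ} {k : ℕ} {N : ℕ} (hN : 1 ≤ N) (h0 : 0 < gaussIter z k)
    (h1 : gaussIter z k ≤ 1 / N) : (N : ℤ) ≤ pquot z (k + 1) := by
  show (N:ℤ) ≤ ⌊(gaussIter z k)⁻¹⌋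
  rw [Int.le_floor]
  have hN0 : (0:ℝ) < N := by exact_mod_cast hN
  push_cast
  calc (N:ℝ) = (1 / (N:ℝ))⁻¹ := by field_simp
    _ ≤ (gaussIter z k)⁻¹ := by
        exact inv_anti₀ h0 h1

/-- Lemma F: iterate near 1 -/
lemma near_one {z : ℝ} {k : ℕ} (h1 : 1/2 < gaussIter z k) (h2 : gaussIter z k < 1) :
    pquot z (k + 1) = 1 ∧ gaussIter z (k + 1) = (gaussIter z k)⁻¹ - 1 ∧
      gaussIter z (k + 1) ≤ 2 * (1 - gaussIter z k) := by
  set g := gaussIter z k with hg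
  have hg0 : 0 < g := by linarith
  have hinv1 : 1 < g⁻¹ := (one_lt_inv₀ hg0).2 h2
  have hinv2 : g⁻¹ < 2 := by
    rw [inv_lt_comm₀ hg0 (by norm_num)]
    linarith
  have hfl : ⌊g⁻¹⌋ = 1 := by
    rw [Int.floor_eq_iff]
    constructor <;> push_cast <;> linarith
  refine ⟨hfl, ?_, ?_⟩
  · show Int.fract g⁻¹ = _
    rw [Int.fract, hfl]; norm_num
  · show Int.fract g⁻¹ ≤ _
    rw [Int.fract, hfl]
    push_cast
    rw [inv_eq_one_div, div_sub' (ne_of_gt hg0)]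
    rw [div_le_iff₀ hg0]
    nlinarith

/-- Lemma C: continuity of gaussIter and local constancy of pquot at points where
the iterates do not vanish up to level n. -/
lemma gauss_cont {x : ℝ} : ∀ n : ℕ, (∀ j, j ≤ n → gaussIter x j ≠ 0) →
    ContinuousAt (fun z => gaussIter z n) x ∧
      ∀ᶠ z in 𝓝 x, ∀ j, j ≤ n → pquot z j = pquot x j := by
  intro n
  induction n with
  | zero =>
    intro h
    have hx0 : Int.fract x ≠ 0 := h 0 le_rfl
    have hlt : (⌊x⌋ : ℝ) < x := by
      rcases lt_or_eq_of_le (Int.floor_le x) with h' | h'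
      · exact h'
      · exact absurd (by rw [Int.fract, ← h', Int.floor_intCast]; ring) hx0
    have hub : x < ⌊x⌋ + 1 := Int.lt_floor_add_one x
    have hev : ∀ᶠ z in 𝓝 x, z ∈ Ioo ((⌊x⌋:ℝ)) ((⌊x⌋:ℝ) + 1) :=
      Ioo_mem_nhds hlt hub
    have hfl : ∀ᶠ z in 𝓝 x, ⌊z⌋ = ⌊x⌋ := by
      filter_upwards [hev] with z hz
      rw [Int.floor_eq_iff]
      exact ⟨hz.1.le, by exact_mod_cast hz.2⟩
    constructor
    · have : (fun z => gaussIter z 0) =ᶠ[𝓝 x] fun z => z - (⌊x⌋:ℝ) := by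
        filter_upwards [hfl] with z hz
        show Int.fract z = _
        rw [Int.fract, hz]
      exact (continuousAt_id.sub continuousAt_const).congr this.symm
    · filter_upwards [hfl] with z hz j hj
      interval_cases j
      exact hz
  | succ n ih =>
    intro h
    obtain ⟨hc, hev⟩ := ih (fun j hj => h j (by omega))
    have hgn : gaussIter x n ≠ 0 := h n (by omega)
    have hw : ContinuousAt (fun z => (gaussIter z n)⁻¹) x := hc.inv₀ hgn
    set y : ℝ := (gaussIter x n)⁻¹ with hy
    have hfy : Int.fract y ≠ 0 := h (n+1) le_rfl
    have hlt : (⌊y⌋ : ℝ) < y := by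
      rcases lt_or_eq_of_le (Int.floor_le y) with h' | h'
      · exact h'
      · exact absurd (by rw [Int.fract, ← h', Int.floor_intCast]; ring) hfy
    have hub : y < ⌊y⌋ + 1 := Int.lt_floor_add_one y
    have hev2 : ∀ᶠ z in 𝓝 x, (gaussIter z n)⁻¹ ∈ Ioo ((⌊y⌋:ℝ)) ((⌊y⌋:ℝ) + 1) :=
      hw (Ioo_mem_nhds hlt hub)
    have hfl : ∀ᶠ z in 𝓝 x, ⌊(gaussIter z n)⁻¹⌋ = ⌊y⌋ := by
      filter_upwards [hev2] with z hz
      rw [Int.floor_eq_iff]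
      exact ⟨hz.1.le, by exact_mod_cast hz.2⟩
    constructor
    · have : (fun z => gaussIter z (n+1)) =ᶠ[𝓝 x] fun z => (gaussIter z n)⁻¹ - (⌊y⌋:ℝ) := by
        filter_upwards [hfl] with z hz
        show Int.fract _ = _
        rw [Int.fract, hz]
      exact ((hw.sub continuousAt_const)).congr this.symm
    · filter_upwards [hfl, hev] with z hz hev' j hj
      rcases Nat.lt_or_ge j (n+1) with h' | h'
      · exact hev' j (by omega)
      · have : j = n + 1 := by omega
        subst this
        show ⌊(gaussIter z n)⁻¹⌋ = ⌊(gaussIter x n)⁻¹⌋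
        exact hz

lemma le_brjuno_of {z : ℝ} {k : ℕ} {N : ℕ} {Q : ℝ} (hz : Irrational z)
    (h1 : 1 ≤ (qden z k : ℝ)) (h2 : (qden z k : ℝ) ≤ Q)
    (hN : (N : ℤ) ≤ pquot z (k + 1)) (hN1 : 1 ≤ N) :
    ENNReal.ofReal (Real.log N / Q) ≤ brjuno z := by
  rw [brjuno, if_pos hz]
  refine le_trans ?_ (ENNReal.le_tsum k)
  apply ENNReal.ofReal_le_ofReal
  unfold brjunoTerm
  have hNR : (1:ℝ) ≤ (N:ℝ) := by exact_mod_cast hN1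
  have hNp : (N:ℝ) ≤ ((pquot z (k+1) : ℤ) : ℝ) := by exact_mod_cast hN
  have hlogN : 0 ≤ Real.log N := Real.log_nonneg hNR
  calc Real.log N / Q ≤ Real.log N / (qden z k : ℝ) := by
        apply div_le_div_of_nonneg_left hlogN (by linarith) h2
    _ ≤ Real.log (pquot z (k+1)) / (qden z k : ℝ) := by
        have hlog : Real.log N ≤ Real.log (pquot z (k+1)) :=
          Real.log_le_log (by linarith) hNp
        gcongr

lemma qdenP_congr {x z : ℝ} (n : ℕ) (h : ∀ j, j ≤ n → pquot z j = pquot x j) :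
    qdenP z n = qdenP x n := by
  match n with
  | 0 => rfl
  | n + 1 => exact qden_congr n (fun j hj => h j (by omega))

lemma rat_blowup {x : ℝ} (hx : ¬ Irrational x) :
    ∃ Q : ℝ, 1 ≤ Q ∧ ∀ N : ℕ, 1 ≤ N →
      ∀ᶠ z in 𝓝 x, ENNReal.ofReal (Real.log N / Q) ≤ brjuno z := by
  classical
  have hex : ∃ n, gaussIter x n = 0 := exists_gauss_zero hx
  set m := Nat.find hex with hmdef
  have hm : gaussIter x m = 0 := Nat.find_spec hex
  have hmin : ∀ j, j < m → gaussIter x j ≠ 0 := fun j hj => Nat.find_min hex hj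
  match hmm : m with
  | 0 =>
    -- x is an integer
    refine ⟨1, le_rfl, fun N hN1 => ?_⟩
    have hxf : ((⌊x⌋ : ℤ) : ℝ) = x := by
      have : Int.fract x = 0 := hm
      rw [Int.fract] at this; linarith
    have hN0 : (0:ℝ) < N := by exact_mod_cast hN1
    set ε : ℝ := min (1/2) (1/(2*N)) with hε
    have hε0 : 0 < ε := by
      apply lt_min (by norm_num) (by positivity)
    have hεhalf : ε ≤ 1/2 := min_le_left _ _
    have hεN : ε ≤ 1/(2*N) := min_le_right _ _
    have hNhalf : (1:ℝ)/(2*N) ≤ 1/N := by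
      apply div_le_div_of_nonneg_left one_pos.le hN0; linarith
    filter_upwards [Ioo_mem_nhds (by linarith : x - ε < x) (by linarith : x < x + ε)]
      with z hz
    by_cases hzI : Irrational z
    swap
    · rw [brjuno, if_neg hzI]; exact le_top
    have hzx : z ≠ x := fun h => hzI (h ▸ not_not.mp hx)
    rcases lt_or_gt_of_ne hzx with hlt | hgt
    · -- z < x : left side
      have hfl : ⌊z⌋ = ⌊x⌋ - 1 := by
        rw [Int.floor_eq_iff]
        push_cast
        constructor
        · rw [hxf]; linarith [hz.1, hεhalf]
        · rw [hxf]; linarith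
      have hg0 : gaussIter z 0 = z - x + 1 := by
        show Int.fract z = _
        rw [Int.fract, hfl]
        push_cast
        rw [hxf]; ring
      have hg0a : 1/2 < gaussIter z 0 := by rw [hg0]; linarith [hz.1, hεhalf]
      have hg0b : gaussIter z 0 < 1 := by rw [hg0]; linarith
      obtain ⟨hp1, _, hg1b⟩ := near_one hg0a hg0b
      have hg1pos : 0 < gaussIter z 1 :=
        lt_of_le_of_ne (gaussIter_nonneg z 1)
          (fun h => (irrational_gaussIter hzI 1) (h ▸ ⟨0, by push_cast; ring⟩))
      have hg1small : gaussIter z 1 ≤ 1 / N := by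
        calc gaussIter z 1 ≤ 2 * (1 - gaussIter z 0) := hg1b
          _ ≤ 2 * ε := by rw [hg0]; nlinarith [hz.1]
          _ ≤ 2 * (1/(2*N)) := by linarith
          _ = 1/N := by field_simp
      have hbig := pquot_big hN1 hg1pos hg1small
      have hq1 : qden z 1 = 1 := hp1
      refine le_brjuno_of (k := 1) hzI ?_ ?_ hbig hN1 <;> rw [hq1] <;> norm_num
    · -- z > x : right side
      have hfl : ⌊z⌋ = ⌊x⌋ := by
        rw [Int.floor_eq_iff]
        constructor
        · rw [hxf]; linarith
        · push_cast; rw [hxf]; linarith [hz.2, hεhalf]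
      have hg0 : gaussIter z 0 = z - x := by
        show Int.fract z = _
        rw [Int.fract, hfl, hxf]
      have hg0pos : 0 < gaussIter z 0 := by rw [hg0]; linarith
      have hg0small : gaussIter z 0 ≤ 1 / N := by
        rw [hg0]
        calc z - x ≤ ε := by linarith [hz.2]
          _ ≤ 1/(2*N) := hεN
          _ ≤ 1/N := hNhalf
      have hbig := pquot_big hN1 hg0pos hg0small
      refine le_brjuno_of (k := 0) hzI (by norm_num [qden]) (by norm_num [qden]) hbig hN1
  | m' + 1 =>
    set g : ℝ := gaussIter x m' with hgdef
    have hgne : g ≠ 0 := hmin m' (by omega)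
    have hg0 : 0 < g := lt_of_le_of_ne (gaussIter_nonneg x m') (Ne.symm hgne)
    have hg1 : g < 1 := gaussIter_lt_one x m'
    have hfr0 : Int.fract g⁻¹ = 0 := hm
    set a : ℤ := ⌊g⁻¹⌋ with hadef
    have hainv : g⁻¹ = (a:ℝ) := by rw [Int.fract] at hfr0; linarith
    have hga : 1 < g⁻¹ := (one_lt_inv₀ hg0).2 hg1
    have ha1 : (1:ℤ) < a := by exact_mod_cast hainv ▸ hga
    have ha2 : 2 ≤ a := by omega
    obtain ⟨hc, hev⟩ := gauss_cont m' (fun j hj => hmin j (by omega))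
    have hone : ∀ j, 1 ≤ j → j ≤ m' → 1 ≤ pquot x j := fun j h1 h2 =>
      one_le_pquot h1 (hmin (j-1) (by omega))
    have hqx : 1 ≤ qden x m' := one_le_qden m' hone
    have hqP : 0 ≤ qdenP x m' := qdenP_nonneg m' hone
    set Q0 : ℤ := a * qden x m' + qdenP x m' with hQ0def
    have hQ01 : 1 ≤ Q0 := by nlinarith
    refine ⟨(Q0:ℝ), by exact_mod_cast hQ01, fun N hN1 => ?_⟩
    have hN0 : (0:ℝ) < N := by exact_mod_cast hN1
    set ε : ℝ := min (1/2) (1/(2*N)) with hε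
    have hε0 : 0 < ε := lt_min (by norm_num) (by positivity)
    have hεhalf : ε ≤ 1/2 := min_le_left _ _
    have hεN : ε ≤ 1/(2*N) := min_le_right _ _
    have hNhalf : (1:ℝ)/(2*N) ≤ 1/N := by
      apply div_le_div_of_nonneg_left one_pos.le hN0; linarith
    have hwc : ContinuousAt (fun z => (gaussIter z m')⁻¹) x := hc.inv₀ hgne
    have hev2 : ∀ᶠ z in 𝓝 x, (gaussIter z m')⁻¹ ∈ Ioo ((a:ℝ) - ε) ((a:ℝ) + ε) := by
      refine hwc (Ioo_mem_nhds ?_ ?_) <;>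
        linarith [show ((gaussIter x m')⁻¹ : ℝ) = (a:ℝ) from hainv]
    filter_upwards [hev, hev2] with z hz1 hz2
    by_cases hzI : Irrational z
    swap
    · rw [brjuno, if_neg hzI]; exact le_top
    set wz : ℝ := (gaussIter z m')⁻¹ with hwzdef
    have hwirr : Irrational wz := (irrational_gaussIter hzI m').inv
    have hwa : wz ≠ (a:ℝ) := hwirr.ne_int a
    have hqzm' : qden z m' = qden x m' := qden_congr m' hz1
    have hqPz : qdenP z m' = qdenP x m' := qdenP_congr m' hz1
    rcases lt_or_gt_of_ne hwa with hlt | hgt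
    · -- wz < a : the "a-1, 1, big" pattern
      have hfl : ⌊wz⌋ = a - 1 := by
        rw [Int.floor_eq_iff]
        push_cast
        exact ⟨by linarith [hz2.1], by linarith⟩
      have hpzm : pquot z (m'+1) = a - 1 := hfl
      have hgm : gaussIter z (m'+1) = wz - ((a:ℝ) - 1) := by
        show Int.fract wz = _
        rw [Int.fract, hfl]
        push_cast
        ring
      have hgma : 1/2 < gaussIter z (m'+1) := by
        rw [hgm]; have := hz2.1; linarith
      have hgmb : gaussIter z (m'+1) < 1 := by rw [hgm]; linarith
      obtain ⟨hp1, heq1, hb1⟩ := near_one hgma hgmb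
      have hpos : 0 < gaussIter z (m'+2) :=
        lt_of_le_of_ne (gaussIter_nonneg z (m'+2))
          (fun h => (irrational_gaussIter hzI (m'+2)) (h ▸ ⟨0, by push_cast; ring⟩))
      have hsmall : gaussIter z (m'+2) ≤ 1/N := by
        calc gaussIter z (m'+2) ≤ 2 * (1 - gaussIter z (m'+1)) := hb1
          _ ≤ 2 * ε := by rw [hgm]; have := hz2.1; nlinarith
          _ ≤ 2 * (1/(2*N)) := by linarith
          _ = 1/N := by field_simp
      have hbig := pquot_big hN1 hpos hsmall
      have hqz : qden z (m'+2) = Q0 := by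
        rw [qden_succ z (m'+1), qden_succ z m', hp1, hpzm]
        show 1 * ((a-1) * qden z m' + qdenP z m') + qden z m' = Q0
        rw [hqzm', hqPz, hQ0def]
        ring
      refine le_brjuno_of (k := m'+2) hzI ?_ ?_ hbig hN1 <;> rw [hqz]
      exact_mod_cast hQ01
    · -- wz > a : the "a, big" pattern
      have hfl : ⌊wz⌋ = a := by
        rw [Int.floor_eq_iff]
        exact ⟨by linarith, by push_cast; linarith [hz2.2]⟩
      have hpzm : pquot z (m'+1) = a := hfl
      have hgm : gaussIter z (m'+1) = wz - (a:ℝ) := by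
        show Int.fract wz = _
        rw [Int.fract, hfl]
      have hpos : 0 < gaussIter z (m'+1) := by rw [hgm]; linarith
      have hsmall : gaussIter z (m'+1) ≤ 1/N := by
        rw [hgm]
        calc wz - (a:ℝ) ≤ ε := by linarith [hz2.2]
          _ ≤ 1/(2*N) := hεN
          _ ≤ 1/N := hNhalf
      have hbig := pquot_big hN1 hpos hsmall
      have hqz : qden z (m'+1) = Q0 := by
        rw [qden_succ z m', hpzm, hqzm', hqPz, hQ0def]
      refine le_brjuno_of (k := m'+1) hzI ?_ ?_ hbig hN1 <;> rw [hqz]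
      exact_mod_cast hQ01

/-- the Brjuno function is lower semicontinuous. -/
theorem statement3 : LowerSemicontinuous brjuno := by
  intro x y hy
  by_cases hx : Irrational x
  · -- irrational point: terms are locally constant
    rw [brjuno, if_pos hx, ENNReal.tsum_eq_iSup_nat, gt_iff_lt, lt_iSup_iff] at hy
    obtain ⟨n, hn⟩ := hy
    obtain ⟨-, hev⟩ := gauss_cont (x := x) n
      (fun j _ => (irrational_gaussIter hx j).ne_zero)
    filter_upwards [hev] with z hz
    by_cases hz' : Irrational z
    · rw [brjuno, if_pos hz']
      refine lt_of_lt_of_le ?_ (ENNReal.sum_le_tsum (Finset.range n))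
      have heq : ∀ k ∈ Finset.range n,
          ENNReal.ofReal (brjunoTerm z k) = ENNReal.ofReal (brjunoTerm x k) := by
        intro k hk
        rw [Finset.mem_range] at hk
        unfold brjunoTerm
        rw [hz (k+1) (by omega), qden_congr k (fun j hj => hz j (by omega))]
      rw [Finset.sum_congr rfl heq]
      exact hn
    · rw [brjuno, if_neg hz']
      exact lt_of_lt_of_le hn le_top
  · -- rational point: brjuno blows up nearby
    have hytop : y < ⊤ := by
      rw [brjuno, if_neg hx] at hy; exact hy
    obtain ⟨Q, hQ1, hQ⟩ := rat_blowup hx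
    set N : ℕ := ⌈Real.exp ((y.toReal + 1) * Q)⌉₊ with hNdef
    have hN1 : 1 ≤ N := Nat.one_le_iff_ne_zero.2 (by
      simp only [hNdef, ne_eq, Nat.ceil_eq_zero, not_le]
      exact Real.exp_pos _)
    have hlogN : (y.toReal + 1) * Q ≤ Real.log N := by
      rw [← Real.log_exp ((y.toReal + 1) * Q)]
      exact Real.log_le_log (Real.exp_pos _) (Nat.le_ceil _)
    have hkey : y < ENNReal.ofReal (Real.log N / Q) := by
      rw [ENNReal.lt_ofReal_iff_toReal_lt hytop.ne]
      have h2 : y.toReal + 1 ≤ Real.log N / Q := by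
        rw [le_div_iff₀ (by linarith)]
        exact hlogN
      linarith
    filter_upwards [hQ N hN1] with z hz
    exact lt_of_lt_of_le hkey hz
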